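/- Let A_1,...,A_k be m-by-n real matrices with vertical stack A, let x0 in R^n be such that v := A x0 is nonzero, and let (S, S-bar) be a partition of {1,...,k} with |S| = s such that the sum over i in S of ||v_i||_2 is at most the sum over i in S-bar of ||v_i||_2, where v_i is the i-th m-by-1 block of v. Define data by b_i := A_i x0 for i in S and b_i := (1/2) A_i x0 for i in S-bar. Then the (P1) cost of x0/2 equals (1/2) sum_{i in S} ||v_i||_2, the (P1) cost of x0 equals (1/2) sum_{i in S-bar} ||v_i||_2, and consequently sum_{i=1}^k ||b_i - A_i (x0/2)||_2 <= sum_{i=1}^k ||b_i - A_i x0||_2, so x0 is not the unique minimizer of (P1) even though b_i = A_i x0 for all i in S. -/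

import Mathlib

/-- Euclidean norm of a vector in `ℝ^m`. -/
noncomputable def euclNorm {m : ℕ} (v : Fin m → ℝ) : ℝ :=
  Real.sqrt (∑ j, v j ^ 2)

/-- The vertical stack of the matrices `A 1, ..., A k`. -/
def stack {k m n : ℕ} (A : Fin k → Matrix (Fin m) (Fin n) ℝ) :
    Matrix (Fin k × Fin m) (Fin n) ℝ :=
  Matrix.of fun p j => A p.1 p.2 j

lemma euclNorm_smul {m : ℕ} (c : ℝ) (w : Fin m → ℝ) :
    euclNorm (c • w) = |c| * euclNorm w := by
  unfold euclNorm
  have : ∑ j, (c • w) j ^ 2 = c ^ 2 * ∑ j, w j ^ 2 := by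
    rw [Finset.mul_sum]; congr 1; ext j; simp [mul_pow]
  rw [this, Real.sqrt_mul (sq_nonneg c), Real.sqrt_sq_eq_abs]

lemma euclNorm_zero {m : ℕ} : euclNorm (0 : Fin m → ℝ) = 0 := by
  simp [euclNorm]

/-- necessity construction: with `v = A x0 ≠ 0`, a partition
`(S, Sᶜ)` with `|S| = s` on which the range-space condition fails, and data
`b i = A i x0` on `S` and `b i = (1/2) A i x0` on `Sᶜ`, the (P1) cost of `x0/2`
equals `(1/2) ∑_{i∈S} ‖v_i‖₂`, the (P1) cost of `x0` equals
`(1/2) ∑_{i∈Sᶜ} ‖v_i‖₂`, and hence the cost of `x0/2` is at most that of `x0`,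
so `x0` is not the unique minimizer of (P1). -/
theorem P1_not_unique_construction {k m n s : ℕ}
    (A : Fin k → Matrix (Fin m) (Fin n) ℝ) (x0 : Fin n → ℝ)
    (S : Finset (Fin k)) (hcard : S.card = s)
    (v : Fin k × Fin m → ℝ) (hv : v = (stack A).mulVec x0) (hvne : v ≠ 0)
    (hineq : ∑ i ∈ S, euclNorm (fun j => v (i, j)) ≤ ∑ i ∈ Sᶜ, euclNorm (fun j => v (i, j)))
    (b : Fin k → Fin m → ℝ)
    (hb : ∀ i, b i = if i ∈ S then (A i).mulVec x0 else (1 / 2 : ℝ) • (A i).mulVec x0) :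
    (∑ i, euclNorm (b i - (A i).mulVec ((1 / 2 : ℝ) • x0))
        = (1 / 2) * ∑ i ∈ S, euclNorm (fun j => v (i, j)))
    ∧ (∑ i, euclNorm (b i - (A i).mulVec x0)
        = (1 / 2) * ∑ i ∈ Sᶜ, euclNorm (fun j => v (i, j)))
    ∧ (∑ i, euclNorm (b i - (A i).mulVec ((1 / 2 : ℝ) • x0))
        ≤ ∑ i, euclNorm (b i - (A i).mulVec x0)) := by
  have hvblock : ∀ i : Fin k, (fun j => v (i, j)) = (A i).mulVec x0 := by
    intro i; ext j; rw [hv]; simp [stack, Matrix.mulVec, dotProduct]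
  have hhalf : ∀ i : Fin k,
      (A i).mulVec ((1 / 2 : ℝ) • x0) = (1 / 2 : ℝ) • (A i).mulVec x0 := by
    intro i; rw [Matrix.mulVec_smul]
  have h1 : ∑ i, euclNorm (b i - (A i).mulVec ((1 / 2 : ℝ) • x0))
      = (1 / 2) * ∑ i ∈ S, euclNorm (fun j => v (i, j)) := by
    rw [← Finset.sum_add_sum_compl S, Finset.mul_sum]
    have hS : ∀ i ∈ S, euclNorm (b i - (A i).mulVec ((1 / 2 : ℝ) • x0))
        = (1 / 2) * euclNorm (fun j => v (i, j)) := by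
      intro i hi
      rw [hb i, if_pos hi, hhalf i, hvblock i]
      have : (A i).mulVec x0 - (1 / 2 : ℝ) • (A i).mulVec x0
          = (1 / 2 : ℝ) • (A i).mulVec x0 := by
        ext j; simp; ring
      rw [this, euclNorm_smul]; norm_num
    have hSc : ∀ i ∈ Sᶜ, euclNorm (b i - (A i).mulVec ((1 / 2 : ℝ) • x0)) = 0 := by
      intro i hi
      rw [hb i, if_neg (Finset.mem_compl.mp hi), hhalf i, sub_self, euclNorm_zero]
    rw [Finset.sum_congr rfl hS, Finset.sum_congr rfl hSc, Finset.sum_const, smul_zero,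
      add_zero]
  have h2 : ∑ i, euclNorm (b i - (A i).mulVec x0)
      = (1 / 2) * ∑ i ∈ Sᶜ, euclNorm (fun j => v (i, j)) := by
    rw [← Finset.sum_add_sum_compl S, Finset.mul_sum]
    have hS : ∀ i ∈ S, euclNorm (b i - (A i).mulVec x0) = 0 := by
      intro i hi; rw [hb i, if_pos hi, sub_self, euclNorm_zero]
    have hSc : ∀ i ∈ Sᶜ, euclNorm (b i - (A i).mulVec x0)
        = (1 / 2) * euclNorm (fun j => v (i, j)) := by
      intro i hi
      rw [hb i, if_neg (Finset.mem_compl.mp hi), hvblock i]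
      have : (1 / 2 : ℝ) • (A i).mulVec x0 - (A i).mulVec x0
          = (-(1 / 2) : ℝ) • (A i).mulVec x0 := by
        ext j; simp; ring
      rw [this, euclNorm_smul]; norm_num
    rw [Finset.sum_congr rfl hS, Finset.sum_congr rfl hSc, Finset.sum_const, smul_zero,
      zero_add]
  refine ⟨h1, h2, ?_⟩
  rw [h1, h2]
  linarith
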